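/- For every γ ∈ (0,1) there exists a constant C_γ such that |exp(-x²/(t+h)) - exp(-x²/t)| ≤ C_γ h^γ t^{-γ} exp(-γ x² / (2(t+h))) for all x ∈ ℝ and all t, h > 0. -/

import Mathlib

open Real Set

lemma aux1_stmt17 {γ u : ℝ} (hγ0 : 0 < γ) (hγ1 : γ ≤ 1) (hu : 0 ≤ u) :
    1 - Real.exp (-u) ≤ u ^ γ := by
  rcases eq_or_lt_of_le hu with rfl | hu'
  · simp [Real.zero_rpow hγ0.ne']
  rcases le_total u 1 with h1 | h1
  · have h2 : 1 - Real.exp (-u) ≤ u := by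
      have := Real.add_one_le_exp (-u)
      linarith
    calc 1 - Real.exp (-u) ≤ u := h2
      _ = u ^ (1:ℝ) := (Real.rpow_one u).symm
      _ ≤ u ^ γ := Real.rpow_le_rpow_of_exponent_ge hu' h1 hγ1
  · have h2 : (1:ℝ) ≤ u ^ γ := Real.one_le_rpow h1 hγ0.le
    have := Real.exp_pos (-u)
    linarith

lemma aux2_stmt17 {γ s : ℝ} (hγ0 : 0 < γ) (hγ1 : γ ≤ 1) (hs : 0 ≤ s) :
    s ^ γ ≤ 2 * Real.exp (s / 2) := by
  have h1 : s ^ γ ≤ 1 + s := by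
    rcases le_total s 1 with h | h
    · have : s ^ γ ≤ 1 := Real.rpow_le_one hs h hγ0.le
      linarith
    · have h2 : s ^ γ ≤ s ^ (1:ℝ) := Real.rpow_le_rpow_of_exponent_le h hγ1
      rw [Real.rpow_one] at h2
      linarith
  have h2 : 1 + s / 2 ≤ Real.exp (s / 2) := by linarith [Real.add_one_le_exp (s / 2)]
  linarith

/-- For every `γ ∈ (0,1)` there is `C_γ` such that
`|exp(-x²/(t+h)) - exp(-x²/t)| ≤ C_γ h^γ t^{-γ} exp(-γx²/(2(t+h)))`
for all `x ∈ ℝ` and `t, h > 0`. -/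
theorem stmt17 (γ : ℝ) (hγ : γ ∈ Set.Ioo (0 : ℝ) 1) :
    ∃ C : ℝ, 0 < C ∧ ∀ x t h : ℝ, 0 < t → 0 < h →
      |Real.exp (-x ^ 2 / (t + h)) - Real.exp (-x ^ 2 / t)|
        ≤ C * h ^ γ * t ^ (-γ) * Real.exp (-(γ * x ^ 2) / (2 * (t + h))) := by
  obtain ⟨hγ0, hγ1⟩ := hγ
  refine ⟨2, by norm_num, ?_⟩
  intro x t h ht hh
  have hth : 0 < t + h := by linarith
  set s := x ^ 2 / (t + h) with hs_def
  have hs : 0 ≤ s := div_nonneg (sq_nonneg x) hth.le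
  set u := x ^ 2 * h / (t * (t + h)) with hu_def
  have hu : 0 ≤ u := div_nonneg (mul_nonneg (sq_nonneg x) hh.le) (mul_nonneg ht.le hth.le)
  have e1 : -x ^ 2 / (t + h) = -s := by rw [hs_def]; ring
  have e2 : -x ^ 2 / t = -s + -u := by
    rw [hs_def, hu_def]; field_simp; ring
  have hexp2 : Real.exp (-x ^ 2 / t) = Real.exp (-s) * Real.exp (-u) := by
    rw [e2, Real.exp_add]
  have habs : |Real.exp (-x ^ 2 / (t + h)) - Real.exp (-x ^ 2 / t)|
      = Real.exp (-s) * (1 - Real.exp (-u)) := by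
    rw [e1, hexp2, abs_of_nonneg]
    · ring
    · have h1 : Real.exp (-u) ≤ 1 := Real.exp_le_one_iff.mpr (by linarith)
      have h2 := (Real.exp_pos (-s)).le
      nlinarith
  rw [habs]
  have hus : u = s * (h / t) := by
    rw [hs_def, hu_def]; field_simp
  have hupow : u ^ γ = s ^ γ * (h ^ γ * t ^ (-γ)) := by
    rw [hus, Real.mul_rpow hs (div_nonneg hh.le ht.le),
      Real.div_rpow hh.le ht.le, Real.rpow_neg ht.le, div_eq_mul_inv]
  have step1 : Real.exp (-s) * (1 - Real.exp (-u)) ≤ Real.exp (-s) * u ^ γ :=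
    mul_le_mul_of_nonneg_left (aux1_stmt17 hγ0 hγ1.le hu) (Real.exp_pos _).le
  have step2 : Real.exp (-s) * u ^ γ
      ≤ 2 * (h ^ γ * t ^ (-γ)) * Real.exp (-(γ * s) / 2) := by
    rw [hupow]
    have h2 : Real.exp (-s) * s ^ γ ≤ 2 * Real.exp (-(γ * s) / 2) := by
      calc Real.exp (-s) * s ^ γ ≤ Real.exp (-s) * (2 * Real.exp (s / 2)) :=
            mul_le_mul_of_nonneg_left (aux2_stmt17 hγ0 hγ1.le hs) (Real.exp_pos _).le
        _ = 2 * Real.exp (-s + s / 2) := by rw [Real.exp_add]; ring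
        _ ≤ 2 * Real.exp (-(γ * s) / 2) := by
            have : -s + s / 2 ≤ -(γ * s) / 2 := by nlinarith
            have := Real.exp_le_exp.mpr this
            linarith
    calc Real.exp (-s) * (s ^ γ * (h ^ γ * t ^ (-γ)))
        = (Real.exp (-s) * s ^ γ) * (h ^ γ * t ^ (-γ)) := by ring
      _ ≤ (2 * Real.exp (-(γ * s) / 2)) * (h ^ γ * t ^ (-γ)) := by
          apply mul_le_mul_of_nonneg_right h2
          exact mul_nonneg (Real.rpow_nonneg hh.le _) (Real.rpow_nonneg ht.le _)
      _ = 2 * (h ^ γ * t ^ (-γ)) * Real.exp (-(γ * s) / 2) := by ring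
  have efin : -(γ * s) / 2 = -(γ * x ^ 2) / (2 * (t + h)) := by
    rw [hs_def]; field_simp
  calc Real.exp (-s) * (1 - Real.exp (-u)) ≤ Real.exp (-s) * u ^ γ := step1
    _ ≤ 2 * (h ^ γ * t ^ (-γ)) * Real.exp (-(γ * s) / 2) := step2
    _ = 2 * h ^ γ * t ^ (-γ) * Real.exp (-(γ * x ^ 2) / (2 * (t + h))) := by
        rw [efin]; ring
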